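/- For a Type B connection with C₂₂² = −C₁₂¹ (so that ρ is symmetric), the covariant derivative ∇ρ is totally symmetric if and only if both C₁₁¹C₁₂¹ + 3C₁₁²C₂₂¹ − 2C₁₂¹C₁₂² + 2C₁₂¹ = 0 and 2C₁₁¹C₂₂¹ − 6(C₁₂¹)² − 4C₁₂²C₂₂¹ − 2C₂₂¹ = 0. -/
import Mathlib


open Real

/-- Partial derivative ∂_i on ℝ². -/
noncomputable def pd (i : Fin 2) (f : ℝ × ℝ → ℝ) : ℝ × ℝ → ℝ :=
  fun p => if i = 0 then deriv (fun t => f (t, p.2)) p.1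
           else deriv (fun t => f (p.1, t)) p.2

/-- Affine Hessian H(f)_{ij} = ∂_i∂_j f − Σ_k Γ_{ij}^k ∂_k f. -/
noncomputable def Hess (Γ : Fin 2 → Fin 2 → Fin 2 → (ℝ × ℝ → ℝ))
    (f : ℝ × ℝ → ℝ) (i j : Fin 2) : ℝ × ℝ → ℝ :=
  fun p => pd i (pd j f) p - ∑ k, Γ i j k p * pd k f p

/-- Ricci tensor ρ_{jk} = ∂_i Γ_{jk}^i − ∂_j Γ_{ik}^i + Γ_{il}^i Γ_{jk}^l − Γ_{jl}^i Γ_{ik}^l. -/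
noncomputable def Ric (Γ : Fin 2 → Fin 2 → Fin 2 → (ℝ × ℝ → ℝ)) (j k : Fin 2) :
    ℝ × ℝ → ℝ :=
  fun p => (∑ i, pd i (Γ j k i) p) - (∑ i, pd j (Γ i k i) p)
    + (∑ i, ∑ l, Γ i l i p * Γ j k l p) - (∑ i, ∑ l, Γ j l i p * Γ i k l p)

/-- Symmetrized Ricci tensor. -/
noncomputable def RicS (Γ : Fin 2 → Fin 2 → Fin 2 → (ℝ × ℝ → ℝ)) (i j : Fin 2) :
    ℝ × ℝ → ℝ :=
  fun p => (Ric Γ i j p + Ric Γ j i p) / 2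

/-- Covariant derivative of the Ricci tensor: (∇ρ)(i,j;k). -/
noncomputable def nabRic (Γ : Fin 2 → Fin 2 → Fin 2 → (ℝ × ℝ → ℝ)) (i j k : Fin 2) :
    ℝ × ℝ → ℝ :=
  fun p => pd k (Ric Γ i j) p - ∑ l, Γ k i l p * Ric Γ l j p
    - ∑ l, Γ k j l p * Ric Γ i l p

/-- Type B Christoffel symbols Γ_{ij}^k = C_{ij}^k / x¹. -/
noncomputable def ΓB (C : Fin 2 → Fin 2 → Fin 2 → ℝ) :
    Fin 2 → Fin 2 → Fin 2 → (ℝ × ℝ → ℝ) :=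
  fun i j k p => C i j k / p.1

/-- Constant numerator of the Ricci tensor: Ric = Rc / x². -/
noncomputable def Rc (C : Fin 2 → Fin 2 → Fin 2 → ℝ) (j k : Fin 2) : ℝ :=
  -C j k 0 + (if j = 0 then ∑ i, C i k i else 0)
    + ∑ i, ∑ l, (C i l i * C j k l - C j l i * C i k l)

/-- Constant numerator of ∇Ric: nabRic = Nc / x³. -/
noncomputable def Nc (C : Fin 2 → Fin 2 → Fin 2 → ℝ) (i j k : Fin 2) : ℝ :=
  (if k = 0 then -2 * Rc C i j else 0)
    - ∑ l, C k i l * Rc C l j - ∑ l, C k j l * Rc C i l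

lemma pd_congr {p : ℝ × ℝ} (hp : p.1 ≠ 0) (i : Fin 2) (f g : ℝ × ℝ → ℝ)
    (h : ∀ q : ℝ × ℝ, q.1 ≠ 0 → f q = g q) : pd i f p = pd i g p := by
  unfold pd
  by_cases hi : i = 0
  · simp only [hi, if_true]
    apply Filter.EventuallyEq.deriv_eq
    filter_upwards [eventually_ne_nhds hp] with t ht
    exact h (t, p.2) ht
  · simp only [hi, if_false]
    have : (fun t => f (p.1, t)) = fun t => g (p.1, t) :=
      funext fun t => h (p.1, t) hp
    rw [this]

lemma pd_div1 {p : ℝ × ℝ} (hp : p.1 ≠ 0) (c : ℝ) (i : Fin 2) :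
    pd i (fun q => c / q.1) p = if i = 0 then -c / p.1 ^ 2 else 0 := by
  unfold pd
  by_cases hi : i = 0
  · simp only [hi, if_true]
    have h : HasDerivAt (fun t : ℝ => c / t) ((0 * p.1 - c * 1) / p.1 ^ 2) p.1 :=
      (hasDerivAt_const p.1 c).div (hasDerivAt_id p.1) hp
    rw [h.deriv]; ring
  · simp only [hi, if_false, deriv_const]

lemma pd_div2 {p : ℝ × ℝ} (hp : p.1 ≠ 0) (c : ℝ) (i : Fin 2) :
    pd i (fun q => c / q.1 ^ 2) p = if i = 0 then -2 * c / p.1 ^ 3 else 0 := by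
  unfold pd
  by_cases hi : i = 0
  · simp only [hi, if_true]
    have h : HasDerivAt (fun t : ℝ => c / t ^ 2)
        ((0 * p.1 ^ 2 - c * (↑2 * p.1 ^ (2 - 1))) / (p.1 ^ 2) ^ 2) p.1 :=
      (hasDerivAt_const p.1 c).div (hasDerivAt_pow 2 p.1) (pow_ne_zero 2 hp)
    rw [h.deriv]
    field_simp
    ring
  · simp only [hi, if_false, deriv_const]

lemma Ric_eq (C : Fin 2 → Fin 2 → Fin 2 → ℝ) {p : ℝ × ℝ} (hp : p.1 ≠ 0)
    (j k : Fin 2) : Ric (ΓB C) j k p = Rc C j k / p.1 ^ 2 := by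
  unfold Ric ΓB Rc
  simp only [Fin.sum_univ_two, pd_div1 hp]
  by_cases hj : j = 0 <;> simp only [hj, if_true, if_false] <;>
    simp <;> field_simp <;> ring

lemma nabRic_eq (C : Fin 2 → Fin 2 → Fin 2 → ℝ) {p : ℝ × ℝ} (hp : p.1 ≠ 0)
    (i j k : Fin 2) : nabRic (ΓB C) i j k p = Nc C i j k / p.1 ^ 3 := by
  unfold nabRic
  rw [pd_congr hp k (Ric (ΓB C) i j) (fun q => Rc C i j / q.1 ^ 2)
    (fun q hq => Ric_eq C hq i j)]
  unfold Nc
  simp only [Fin.sum_univ_two, pd_div2 hp, Ric_eq C hp, ΓB]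
  by_cases hk : k = 0 <;> simp only [hk, if_true, if_false] <;>
    simp <;> field_simp <;> ring

set_option maxHeartbeats 2000000 in
/-- For a Type B connection with symmetric Ricci tensor (C₂₂² = −C₁₂¹), ∇ρ is
totally symmetric iff the two displayed polynomial equations hold. -/
theorem typeB_nablaRicci_totally_symmetric_iff
    (C : Fin 2 → Fin 2 → Fin 2 → ℝ)
    (hsym : ∀ i j k, C i j k = C j i k)
    (hρsym : C 1 1 1 = - C 0 1 0) :
    (∀ i j k : Fin 2, ∀ p : ℝ × ℝ, 0 < p.1 →
        nabRic (ΓB C) i j k p = nabRic (ΓB C) j i k p ∧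
        nabRic (ΓB C) i j k p = nabRic (ΓB C) i k j p)
      ↔ (C 0 0 0 * C 0 1 0 + 3 * C 0 0 1 * C 1 1 0
            - 2 * C 0 1 0 * C 0 1 1 + 2 * C 0 1 0 = 0 ∧
         2 * C 0 0 0 * C 1 1 0 - 6 * (C 0 1 0) ^ 2
            - 4 * C 0 1 1 * C 1 1 0 - 2 * C 1 1 0 = 0) := by
  constructor
  · intro h
    have hp : ((1 : ℝ), (0 : ℝ)).1 ≠ 0 := one_ne_zero
    have e1 := (h 0 1 0 (1, 0) one_pos).2
    have e2 := (h 1 0 1 (1, 0) one_pos).2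
    rw [nabRic_eq C hp, nabRic_eq C hp] at e1 e2
    simp only [one_pow, div_one] at e1 e2
    simp only [Nc, Rc, Fin.sum_univ_two, hsym 1 0, hρsym] at e1 e2
    norm_num at e1 e2
    constructor
    · linear_combination e1
    · linear_combination e2
  · rintro ⟨h1, h2⟩ i j k p hp
    have hp' : p.1 ≠ 0 := ne_of_gt hp
    rw [nabRic_eq C hp', nabRic_eq C hp', nabRic_eq C hp']
    have key : Nc C i j k = Nc C j i k ∧ Nc C i j k = Nc C i k j := by
      fin_cases i <;> fin_cases j <;> fin_cases k <;> constructor <;>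
        simp only [Nc, Rc, Fin.sum_univ_two, Fin.mk_zero, Fin.mk_one, hsym 1 0, hρsym] <;> norm_num <;>
        first
          | rfl
          | ring1
          | linear_combination h1
          | linear_combination -h1
          | linear_combination h2
          | linear_combination -h2
    exact ⟨by rw [key.1], by rw [key.2]⟩
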